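/- Let Π be a set, k : Π × Π → ℝ a symmetric kernel (k(π,π') = k(π',π) for all π, π'), λ > 0, t ≥ 1, points π₁, …, π_t ∈ Π whose t×t Gram matrix is symmetric positive semidefinite, and observed values ũ₁, …, ũ_t ∈ ℝ. For s ∈ {t−1, t} and π, π' ∈ Π define μ_s(π) := k_s(π)ᵀ(K_s + λI)^{-1}(ũ₁,…,ũ_s)ᵀ, k_s(π,π') := k(π,π') − k_s(π)ᵀ(K_s + λI)^{-1}k_s(π'), and σ_s²(π) := k_s(π,π), where K_s is the s×s Gram matrix of (π₁,…,π_s) and k_s(π) := (k(π,π₁),…,k(π,π_s))ᵀ. Then λ + σ²_{t−1}(π_t) > 0 and, for every π ∈ Π, μ_t(π) = μ_{t−1}(π) + (k_{t−1}(π, π_t)/(λ + σ²_{t−1}(π_t)))·(ũ_t − μ_{t−1}(π_t)). -/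

import Mathlib

open Matrix

/-- The Gram (kernel) matrix of the points `p` under the kernel `k`. -/
noncomputable def gramMatrix {α : Type*} (k : α → α → ℝ) {t : ℕ} (p : Fin t → α) :
    Matrix (Fin t) (Fin t) ℝ :=
  Matrix.of fun i j => k (p i) (p j)

/-- The GP posterior mean `μ_t(π) = k_t(π)ᵀ (K_t + λI)⁻¹ ũ` after observing values `v`
at the points `p`, with noise parameter `lam`. -/
noncomputable def postMean {α : Type*} (k : α → α → ℝ) (lam : ℝ) {t : ℕ}
    (p : Fin t → α) (v : Fin t → ℝ) (π : α) : ℝ :=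
  (fun i => k π (p i)) ⬝ᵥ ((gramMatrix k p + lam • 1)⁻¹ *ᵥ v)

/-- The GP posterior covariance
`k_t(π,π') = k(π,π') − k_t(π)ᵀ (K_t + λI)⁻¹ k_t(π')` after observing the points `p`,
with noise parameter `lam`. -/
noncomputable def postCov {α : Type*} (k : α → α → ℝ) (lam : ℝ) {t : ℕ}
    (p : Fin t → α) (π π' : α) : ℝ :=
  k π π' - (fun i => k π (p i)) ⬝ᵥ ((gramMatrix k p + lam • 1)⁻¹ *ᵥ fun i => k π' (p i))


private lemma snoc_dot {n : ℕ} (f : Fin (n+1) → ℝ) (w : Fin n → ℝ) (r : ℝ) :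
    f ⬝ᵥ Fin.snoc w r = (fun i => f i.castSucc) ⬝ᵥ w + f (Fin.last n) * r := by
  simp [dotProduct, Fin.sum_univ_castSucc]

private lemma mulVec_snoc_eq {n : ℕ} (M : Matrix (Fin (n+1)) (Fin (n+1)) ℝ)
    (A : Matrix (Fin n) (Fin n) ℝ) (b : Fin n → ℝ) (c : ℝ)
    (h1 : ∀ i j : Fin n, M i.castSucc j.castSucc = A i j)
    (h2 : ∀ i : Fin n, M i.castSucc (Fin.last n) = b i)
    (h3 : ∀ j : Fin n, M (Fin.last n) j.castSucc = b j)
    (h4 : M (Fin.last n) (Fin.last n) = c)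
    (w : Fin n → ℝ) (r : ℝ) :
    M *ᵥ Fin.snoc w r = Fin.snoc (A *ᵥ w + r • b) (b ⬝ᵥ w + c * r) := by
  funext i
  refine Fin.lastCases ?_ (fun i => ?_) i
  · show (fun j => M (Fin.last n) j) ⬝ᵥ Fin.snoc w r = _
    rw [snoc_dot]
    simp only [h3, h4, Fin.snoc_last]
  · show (fun j => M i.castSucc j) ⬝ᵥ Fin.snoc w r = _
    rw [snoc_dot]
    simp only [h1, h2, Fin.snoc_castSucc, Pi.add_apply, Pi.smul_apply, smul_eq_mul]
    rw [mul_comm r (b i)]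
    rfl

private lemma block_solve {n : ℕ} (M : Matrix (Fin (n+1)) (Fin (n+1)) ℝ)
    (A : Matrix (Fin n) (Fin n) ℝ) (b : Fin n → ℝ) (c : ℝ)
    (h1 : ∀ i j : Fin n, M i.castSucc j.castSucc = A i j)
    (h2 : ∀ i : Fin n, M i.castSucc (Fin.last n) = b i)
    (h3 : ∀ j : Fin n, M (Fin.last n) j.castSucc = b j)
    (h4 : M (Fin.last n) (Fin.last n) = c)
    (hA : IsUnit A.det) (hM : IsUnit M.det)
    (hs : c - b ⬝ᵥ (A⁻¹ *ᵥ b) ≠ 0)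
    (v : Fin (n+1) → ℝ) :
    M⁻¹ *ᵥ v = Fin.snoc
      ((A⁻¹ *ᵥ fun i => v i.castSucc) -
        ((v (Fin.last n) - b ⬝ᵥ (A⁻¹ *ᵥ fun i => v i.castSucc)) /
          (c - b ⬝ᵥ (A⁻¹ *ᵥ b))) • (A⁻¹ *ᵥ b))
      ((v (Fin.last n) - b ⬝ᵥ (A⁻¹ *ᵥ fun i => v i.castSucc)) /
        (c - b ⬝ᵥ (A⁻¹ *ᵥ b))) := by
  set y := A⁻¹ *ᵥ fun i => v i.castSucc with hy
  set u := A⁻¹ *ᵥ b with hu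
  set β := (v (Fin.last n) - b ⬝ᵥ y) / (c - b ⬝ᵥ u) with hβ
  have hAy : A *ᵥ y = fun i => v i.castSucc := by
    rw [hy, mulVec_mulVec, mul_nonsing_inv _ hA, one_mulVec]
  have hAu : A *ᵥ u = b := by
    rw [hu, mulVec_mulVec, mul_nonsing_inv _ hA, one_mulVec]
  have key : M *ᵥ Fin.snoc (y - β • u) β = v := by
    rw [mulVec_snoc_eq M A b c h1 h2 h3 h4]
    funext i
    refine Fin.lastCases ?_ (fun i => ?_) i
    · rw [Fin.snoc_last, dotProduct_sub, dotProduct_smul, smul_eq_mul]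
      have : b ⬝ᵥ y - β * (b ⬝ᵥ u) + c * β = b ⬝ᵥ y + β * (c - b ⬝ᵥ u) := by ring
      rw [this, hβ, div_mul_cancel₀ _ hs]
      ring
    · rw [Fin.snoc_castSucc, mulVec_sub, mulVec_smul, hAy, hAu]
      simp
  calc M⁻¹ *ᵥ v = M⁻¹ *ᵥ (M *ᵥ Fin.snoc (y - β • u) β) := by rw [key]
    _ = _ := by rw [mulVec_mulVec, nonsing_inv_mul _ hM, one_mulVec]

private lemma schur_pos {n : ℕ} (M : Matrix (Fin (n+1)) (Fin (n+1)) ℝ)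
    (A : Matrix (Fin n) (Fin n) ℝ) (b : Fin n → ℝ) (c : ℝ)
    (h1 : ∀ i j : Fin n, M i.castSucc j.castSucc = A i j)
    (h2 : ∀ i : Fin n, M i.castSucc (Fin.last n) = b i)
    (h3 : ∀ j : Fin n, M (Fin.last n) j.castSucc = b j)
    (h4 : M (Fin.last n) (Fin.last n) = c)
    (hA : IsUnit A.det) (hM : M.PosDef) :
    0 < c - b ⬝ᵥ (A⁻¹ *ᵥ b) := by
  set u := A⁻¹ *ᵥ b with hu
  have hAu : A *ᵥ u = b := by
    rw [hu, mulVec_mulVec, mul_nonsing_inv _ hA, one_mulVec]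
  set z : Fin (n+1) → ℝ := Fin.snoc (-u) 1 with hz
  have hzne : z ≠ 0 := by
    intro h
    have := congrFun h (Fin.last n)
    simp [hz] at this
  have hpos := hM.dotProduct_mulVec_pos hzne
  rw [star_trivial] at hpos
  have hMz : M *ᵥ z = Fin.snoc (0 : Fin n → ℝ) (b ⬝ᵥ (-u) + c * 1) := by
    rw [hz, mulVec_snoc_eq M A b c h1 h2 h3 h4, mulVec_neg, hAu]
    simp
  rw [hMz, hz, snoc_dot] at hpos
  simp only [Fin.snoc_castSucc, Fin.snoc_last, dotProduct_zero, dotProduct_neg] at hpos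
  linarith
theorem posterior_mean_recursive_update
    {α : Type*} (k : α → α → ℝ) (hsymm : ∀ π π' : α, k π π' = k π' π)
    (lam : ℝ) (hlam : 0 < lam) (n : ℕ)
    (p : Fin (n + 1) → α) (v : Fin (n + 1) → ℝ)
    (hGram : (gramMatrix k p).PosSemidef) :
    0 < lam + postCov k lam (fun i : Fin n => p i.castSucc)
        (p (Fin.last n)) (p (Fin.last n)) ∧
    ∀ π : α,
      postMean k lam p v π =
        postMean k lam (fun i : Fin n => p i.castSucc) (fun i => v i.castSucc) π +
        postCov k lam (fun i : Fin n => p i.castSucc) π (p (Fin.last n)) /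
            (lam + postCov k lam (fun i : Fin n => p i.castSucc)
              (p (Fin.last n)) (p (Fin.last n))) *
          (v (Fin.last n) -
            postMean k lam (fun i : Fin n => p i.castSucc)
              (fun i => v i.castSucc) (p (Fin.last n))) := by
  set M : Matrix (Fin (n+1)) (Fin (n+1)) ℝ := gramMatrix k p + lam • 1 with hMdef
  set A : Matrix (Fin n) (Fin n) ℝ :=
    gramMatrix k (fun i : Fin n => p i.castSucc) + lam • 1 with hAdef
  set t : α := p (Fin.last n) with ht
  set b : Fin n → ℝ := fun i => k t (p i.castSucc) with hb
  set c : ℝ := k t t + lam with hc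
  have hIpd : (lam • (1 : Matrix (Fin (n+1)) (Fin (n+1)) ℝ)).PosDef := by
    rw [smul_one_eq_diagonal]
    exact .diagonal fun _ => hlam
  have hIpd' : (lam • (1 : Matrix (Fin n) (Fin n) ℝ)).PosDef := by
    rw [smul_one_eq_diagonal]
    exact .diagonal fun _ => hlam
  have hMPD : M.PosDef := Matrix.PosDef.posSemidef_add hGram hIpd
  have hGq : (gramMatrix k (fun i : Fin n => p i.castSucc)).PosSemidef :=
    hGram.submatrix Fin.castSucc
  have hAPD : A.PosDef := Matrix.PosDef.posSemidef_add hGq hIpd'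
  have hAdet : IsUnit A.det := hAPD.det_pos.ne'.isUnit
  have hMdet : IsUnit M.det := hMPD.det_pos.ne'.isUnit
  have h1 : ∀ i j : Fin n, M i.castSucc j.castSucc = A i j := by
    intro i j
    simp [hMdef, hAdef, gramMatrix, Matrix.add_apply, Matrix.smul_apply,
      Matrix.one_apply, Fin.castSucc_inj]
  have h2 : ∀ i : Fin n, M i.castSucc (Fin.last n) = b i := by
    intro i
    simp [hMdef, hb, gramMatrix, Matrix.add_apply, Matrix.smul_apply,
      Matrix.one_apply, (Fin.castSucc_lt_last i).ne, hsymm t (p i.castSucc)]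
    rfl
  have h3 : ∀ j : Fin n, M (Fin.last n) j.castSucc = b j := by
    intro j
    simp [hMdef, hb, gramMatrix, Matrix.add_apply, Matrix.smul_apply,
      Matrix.one_apply, (Fin.castSucc_lt_last j).ne']
    rfl
  have h4 : M (Fin.last n) (Fin.last n) = c := by
    simp [hMdef, hc, gramMatrix, Matrix.add_apply, Matrix.smul_apply, Matrix.one_apply]
    rfl
  have hspos : 0 < c - b ⬝ᵥ (A⁻¹ *ᵥ b) := schur_pos M A b c h1 h2 h3 h4 hAdet hMPD
  have hcov : lam + postCov k lam (fun i : Fin n => p i.castSucc) t t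
      = c - b ⬝ᵥ (A⁻¹ *ᵥ b) := by
    simp only [postCov, hc]
    ring_nf
    rfl
  refine ⟨by rw [hcov]; exact hspos, fun π => ?_⟩
  rw [hcov]
  simp only [postMean, postCov]
  rw [block_solve M A b c h1 h2 h3 h4 hAdet hMdet hspos.ne' v, snoc_dot]
  simp only [Fin.snoc_castSucc, Fin.snoc_last, dotProduct_sub, dotProduct_smul, smul_eq_mul]
  have hμt : (fun i => k t ((fun i : Fin n => p i.castSucc) i)) ⬝ᵥ
      (A⁻¹ *ᵥ fun i => v i.castSucc) = b ⬝ᵥ (A⁻¹ *ᵥ fun i => v i.castSucc) := rfl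
  rw [hμt]
  field_simp
  ring
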